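/- arXiv:2512.19571 — 2 statements merged into one kernel-verified Lean document; each statement's English description precedes it below -/
import Mathlib

section
/- Ahlfors' maximality principle: if ρ : 𝔻 → [0,∞) is a conformal metric density (continuous, positive off a discrete set, C² where positive) with curvature K_ρ(z) = −Δ(log ρ)(z)/ρ(z)² ≤ −1 at every point where ρ(z) > 0, then ρ(z) ≤ 2/(1 − |z|²) for all z ∈ 𝔻. -/
open Metric Complex

section AuxLemmas

open Filter Topology Set

private lemma contDiffAt_two_deriv_diff_aux {f : ℝ → ℝ} {a : ℝ} (hf : ContDiffAt ℝ 2 f a) :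
    DifferentiableAt ℝ (deriv f) a := by
  obtain ⟨u, hu, hcd⟩ := hf.contDiffOn le_rfl (by simp)
  obtain ⟨v, hvu, hv, hav⟩ := _root_.mem_nhds_iff.1 hu
  have h1 : ContDiffOn ℝ 1 (deriv f) v :=
    (hcd.mono hvu).deriv_of_isOpen hv (by norm_num)
  exact ((h1 a hav).differentiableWithinAt one_ne_zero).differentiableAt (hv.mem_nhds hav)

/-- Second-derivative test: at a local max of a `C²` function, `f'' ≤ 0`. -/
private lemma second_deriv_nonpos_of_isLocalMax_aux {f : ℝ → ℝ} {a : ℝ}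
    (hf : ContDiffAt ℝ 2 f a) (hmax : IsLocalMax f a) :
    deriv (deriv f) a ≤ 0 := by
  by_contra hpos
  push_neg at hpos
  have hd1 : deriv f a = 0 := hmax.deriv_eq_zero
  have hdd : HasDerivAt (deriv f) (deriv (deriv f) a) a :=
    (contDiffAt_two_deriv_diff_aux hf).hasDerivAt
  have hslope := hasDerivAt_iff_tendsto_slope.1 hdd
  have h1 : ∀ᶠ x in 𝓝[>] a, 0 < deriv f x := by
    have h2 : ∀ᶠ x in 𝓝[>] a, 0 < slope (deriv f) a x := by
      have h3 := hslope.mono_left (nhdsWithin_mono a (fun x hx => ne_of_gt hx))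
      exact h3.eventually (eventually_gt_nhds hpos)
    filter_upwards [h2, self_mem_nhdsWithin] with x hx hx'
    have hxa : (0:ℝ) < x - a := sub_pos.2 hx'
    have : slope (deriv f) a x = deriv f x / (x - a) := by
      rw [slope_def_field, hd1]; ring
    rw [this] at hx
    exact (div_pos_iff.1 hx).resolve_right (fun h => absurd hxa (by linarith [h.2])) |>.1
  have h4 : ∀ᶠ x in 𝓝[>] a, (ContDiffAt ℝ 2 f x ∧ f x ≤ f a) ∧ 0 < deriv f x :=
    (((hf.eventually (by simp)).and hmax).filter_mono nhdsWithin_le_nhds).and h1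
  obtain ⟨b, hb, hIoo⟩ := (nhdsGT_basis a).eventually_iff.1 h4
  set x := (a + b) / 2 with hxdef
  have hax : a < x := by simp [hxdef]; linarith
  have hxb : x < b := by simp [hxdef]; linarith
  have hcont : ContinuousOn f (Icc a x) := by
    intro t ht
    rcases eq_or_lt_of_le ht.1 with h | h
    · rw [← h]; exact hf.continuousAt.continuousWithinAt
    · exact ((hIoo ⟨h, lt_of_le_of_lt ht.2 hxb⟩).1.1.continuousAt).continuousWithinAt
  have hdiff : DifferentiableOn ℝ f (Ioo a x) := fun t ht =>
    ((hIoo ⟨ht.1, lt_trans ht.2 hxb⟩).1.1.differentiableAt two_ne_zero).differentiableWithinAt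
  obtain ⟨c, hc, hcslope⟩ := exists_deriv_eq_slope f hax hcont hdiff
  have hc' : 0 < deriv f c := (hIoo ⟨hc.1, lt_trans hc.2 hxb⟩).2
  have hfx : f x ≤ f a := (hIoo ⟨hax, hxb⟩).1.2
  rw [hcslope] at hc'
  have : (0:ℝ) < x - a := sub_pos.2 hax
  have h5 : 0 < f x - f a :=
    (div_pos_iff.1 hc').resolve_right (fun h => absurd this (by linarith [h.2])) |>.1
  linarith

private lemma hasDerivAt_log_sub_sq_aux (c : ℝ) {t : ℝ} (h : t^2 < c) :
    HasDerivAt (fun s : ℝ => Real.log (c - s^2)) (-(2*t) / (c - t^2)) t := by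
  have h0 : c - t^2 ≠ 0 := by nlinarith
  have h1 : HasDerivAt (fun s : ℝ => c - s^2) (-(2*t)) t := by
    simpa using (hasDerivAt_pow 2 t).const_sub c
  have := (Real.hasDerivAt_log h0).comp t h1
  rw [div_eq_inv_mul]
  exact this

private lemma deriv_deriv_log_sub_sq_aux (c : ℝ) {t : ℝ} (h : t^2 < c) :
    deriv (deriv (fun s : ℝ => Real.log (c - s^2))) t
      = (-2*c - 2*t^2) / (c - t^2)^2 := by
  have hopen : IsOpen {s : ℝ | s^2 < c} := isOpen_lt (by continuity) continuous_const
  have hev : deriv (fun s : ℝ => Real.log (c - s^2)) =ᶠ[𝓝 t] fun s => -(2*s) / (c - s^2) := by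
    filter_upwards [hopen.mem_nhds h] with s hs
    exact (hasDerivAt_log_sub_sq_aux c hs).deriv
  rw [hev.deriv_eq]
  have h0 : c - t^2 ≠ 0 := by nlinarith
  have hnum : HasDerivAt (fun s : ℝ => -(2*s)) (-2) t := by
    simpa using ((hasDerivAt_id t).const_mul (2:ℝ)).fun_neg
  have hden : HasDerivAt (fun s : ℝ => c - s^2) (-(2*t)) t := by
    simpa using (hasDerivAt_pow 2 t).const_sub c
  have hD := hnum.fun_div hden h0
  rw [hD.deriv]
  congr 1
  ring

private lemma deriv_deriv_add_aux {f g : ℝ → ℝ} {x : ℝ}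
    (hf : ContDiffAt ℝ 2 f x) (hg : ContDiffAt ℝ 2 g x) :
    deriv (deriv (fun t => f t + g t)) x = deriv (deriv f) x + deriv (deriv g) x := by
  have hev : deriv (fun t => f t + g t) =ᶠ[𝓝 x] fun t => deriv f t + deriv g t := by
    filter_upwards [hf.eventually (by simp), hg.eventually (by simp)] with t htf htg
    exact deriv_fun_add (htf.differentiableAt two_ne_zero) (htg.differentiableAt two_ne_zero)
  rw [hev.deriv_eq]
  exact deriv_fun_add (contDiffAt_two_deriv_diff_aux hf) (contDiffAt_two_deriv_diff_aux hg)

end AuxLemmas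

/-- The planar Laplacian ∂²/∂x² + ∂²/∂y² of a function `g : ℂ → ℝ`. -/
noncomputable def planarLaplacian (g : ℂ → ℝ) (z : ℂ) : ℝ :=
  deriv (deriv (fun x : ℝ => g (x + z.im * Complex.I))) z.re +
    deriv (deriv (fun y : ℝ => g (z.re + y * Complex.I))) z.im

open Filter Topology Set

theorem ahlfors_maximality (ρ : ℂ → ℝ)
    (hnonneg : ∀ z ∈ ball (0 : ℂ) 1, 0 ≤ ρ z)
    (hcont : ContinuousOn ρ (ball (0 : ℂ) 1))
    (hdiscrete : ∀ z ∈ ball (0 : ℂ) 1, ρ z = 0 →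
      ∃ U ∈ nhds z, ∀ w ∈ U, w ≠ z → ρ w ≠ 0)
    (hC2 : ∀ z ∈ ball (0 : ℂ) 1, 0 < ρ z → ContDiffAt ℝ 2 ρ z)
    (hcurv : ∀ z ∈ ball (0 : ℂ) 1, 0 < ρ z →
      -planarLaplacian (fun w => Real.log (ρ w)) z / ρ z ^ 2 ≤ -1) :
    ∀ z ∈ ball (0 : ℂ) 1, ρ z ≤ 2 / (1 - ‖z‖ ^ 2) := by
  intro z hz
  have hz1 : ‖z‖ < 1 := by rwa [mem_ball_zero_iff] at hz
  have habs2 : ∀ ζ : ℂ, ‖ζ‖^2 = ζ.re^2 + ζ.im^2 := fun ζ => by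
    rw [Complex.sq_norm, Complex.normSq_apply]; ring
  have key : ∀ r : ℝ, ‖z‖ < r → r < 1 →
      ρ z ≤ 2*r / (r^2 - ‖z‖^2) := by
    intro r hzr hr1
    have hr0 : 0 < r := lt_of_le_of_lt (norm_nonneg z) hzr
    have hKball : closedBall (0:ℂ) r ⊆ ball 0 1 := closedBall_subset_ball hr1
    have hcontu : ContinuousOn (fun w => ρ w * (r^2 - ‖w‖^2)) (closedBall (0:ℂ) r) :=
      (hcont.mono hKball).mul
        ((continuous_const.sub (continuous_norm.pow 2)).continuousOn)
    obtain ⟨z₁, hz₁K, hmax⟩ := (isCompact_closedBall (0:ℂ) r).exists_isMaxOn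
      ⟨0, mem_closedBall_self hr0.le⟩ hcontu
    by_cases hM : ρ z₁ * (r^2 - ‖z₁‖^2) ≤ 2*r
    · have hzK : z ∈ closedBall (0:ℂ) r := by
        rw [mem_closedBall_zero_iff]; exact hzr.le
      have h1 : ρ z * (r^2 - ‖z‖^2) ≤ ρ z₁ * (r^2 - ‖z₁‖^2) := hmax hzK
      have hspos : 0 < r^2 - ‖z‖^2 := by nlinarith [norm_nonneg z]
      rw [le_div_iff₀ hspos]
      linarith
    · exfalso
      push_neg at hM
      have hz₁1 : z₁ ∈ ball (0:ℂ) 1 := hKball hz₁K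
      have hz₁r : ‖z₁‖ ≤ r := by
        rwa [mem_closedBall_zero_iff] at hz₁K
      have hs₁0 : 0 ≤ r^2 - ‖z₁‖^2 := by nlinarith [norm_nonneg z₁]
      have hρ₁ : 0 < ρ z₁ := by
        rcases lt_or_eq_of_le (hnonneg z₁ hz₁1) with h | h
        · exact h
        · exfalso; nlinarith
      have hs₁ : 0 < r^2 - ‖z₁‖^2 := by
        rcases lt_or_eq_of_le hs₁0 with h | h
        · exact h
        · exfalso; nlinarith
      have hz₁ball : z₁ ∈ ball (0:ℂ) r := by
        rw [mem_ball_zero_iff]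
        nlinarith [norm_nonneg z₁]
      have hρ₁big : 2*r / (r^2 - ‖z₁‖^2) < ρ z₁ := (div_lt_iff₀ hs₁).2 (by linarith)
      -- curvature bound : Δ log ρ ≥ ρ²
      have hp2 : (0:ℝ) < ρ z₁^2 := by positivity
      have hL : ρ z₁^2 ≤ planarLaplacian (fun w => Real.log (ρ w)) z₁ := by
        have h := hcurv z₁ hz₁1 hρ₁
        rw [div_le_iff₀ hp2] at h
        nlinarith
      -- the comparison function
      set w : ℂ → ℝ := fun ζ => Real.log (ρ ζ) + Real.log (r^2 - ζ.re^2 - ζ.im^2) with hwdef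
      have hρcont : ContinuousAt ρ z₁ := hcont.continuousAt (isOpen_ball.mem_nhds hz₁1)
      have hmaxw : IsLocalMax w z₁ := by
        have hev1 : ∀ᶠ ζ in 𝓝 z₁, 0 < ρ ζ := hρcont.eventually (eventually_gt_nhds hρ₁)
        have hsz₁' : 0 < r^2 - z₁.re^2 - z₁.im^2 := by nlinarith [habs2 z₁]
        filter_upwards [hev1, isOpen_ball.mem_nhds hz₁ball] with ζ hζρ hζball
        have hζr : ‖ζ‖ < r := by
          rwa [mem_ball_zero_iff] at hζball
        have hsζ : 0 < r^2 - ζ.re^2 - ζ.im^2 := by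
          nlinarith [habs2 ζ, norm_nonneg ζ]
        have hu : ρ ζ * (r^2 - ‖ζ‖^2) ≤ ρ z₁ * (r^2 - ‖z₁‖^2) :=
          hmax (ball_subset_closedBall hζball)
        simp only [hwdef]
        rw [← Real.log_mul (ne_of_gt hζρ) (ne_of_gt hsζ),
          ← Real.log_mul (ne_of_gt hρ₁) (ne_of_gt hsz₁')]
        apply Real.log_le_log (by positivity)
        have e1 : r^2 - ζ.re^2 - ζ.im^2 = r^2 - ‖ζ‖^2 := by rw [habs2 ζ]; ring
        have e2 : r^2 - z₁.re^2 - z₁.im^2 = r^2 - ‖z₁‖^2 := by rw [habs2 z₁]; ring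
        rw [e1, e2]
        exact hu
      -- C² regularity of the pieces
      have hρC2 : ContDiffAt ℝ 2 ρ z₁ := hC2 z₁ hz₁1 hρ₁
      have hlogρ : ContDiffAt ℝ 2 (fun ζ : ℂ => Real.log (ρ ζ)) z₁ :=
        (Real.contDiffAt_log.2 (ne_of_gt hρ₁)).comp z₁ hρC2
      -- x-direction
      have hφx : ContDiff ℝ 2 (fun x : ℝ => (x:ℂ) + (z₁.im:ℂ) * Complex.I) :=
        Complex.ofRealCLM.contDiff.add contDiff_const
      have hφxa : ((z₁.re : ℝ):ℂ) + (z₁.im:ℂ) * Complex.I = z₁ := Complex.re_add_im z₁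
      have hwx : (fun x : ℝ => w ((x:ℂ) + (z₁.im:ℂ) * Complex.I))
          = fun x : ℝ => Real.log (ρ ((x:ℂ) + (z₁.im:ℂ) * Complex.I))
              + Real.log ((r^2 - z₁.im^2) - x^2) := by
        funext x
        simp only [hwdef]
        have : r^2 - ((x:ℂ) + (z₁.im:ℂ) * Complex.I).re^2
            - ((x:ℂ) + (z₁.im:ℂ) * Complex.I).im^2 = (r^2 - z₁.im^2) - x^2 := by
          simp; ring
        rw [this]
      have hlogρx : ContDiffAt ℝ 2
          (fun x : ℝ => Real.log (ρ ((x:ℂ) + (z₁.im:ℂ) * Complex.I))) z₁.re := by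
        have h' : ContDiffAt ℝ 2 (fun ζ : ℂ => Real.log (ρ ζ))
            (((z₁.re : ℝ):ℂ) + (z₁.im:ℂ) * Complex.I) := by rw [hφxa]; exact hlogρ
        exact h'.comp z₁.re hφx.contDiffAt
      have ha2x : z₁.re^2 < r^2 - z₁.im^2 := by nlinarith [habs2 z₁]
      have hgx : ContDiffAt ℝ 2 (fun x : ℝ => Real.log ((r^2 - z₁.im^2) - x^2)) z₁.re := by
        have h0 : (r^2 - z₁.im^2) - z₁.re^2 ≠ 0 := by nlinarith
        exact (Real.contDiffAt_log.2 h0).comp z₁.re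
          ((contDiff_const.sub (contDiff_id.pow 2)).contDiffAt)
      have hwxC2 : ContDiffAt ℝ 2 (fun x : ℝ => w ((x:ℂ) + (z₁.im:ℂ) * Complex.I)) z₁.re := by
        rw [hwx]; exact hlogρx.add hgx
      have hmaxwx : IsLocalMax (fun x : ℝ => w ((x:ℂ) + (z₁.im:ℂ) * Complex.I)) z₁.re := by
        have h' : IsLocalMax w (((z₁.re : ℝ):ℂ) + (z₁.im:ℂ) * Complex.I) := by
          rw [hφxa]; exact hmaxw
        exact IsLocalMax.comp_continuous (g := fun x : ℝ => (x:ℂ) + (z₁.im:ℂ) * Complex.I)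
          (b := z₁.re) h' hφx.continuous.continuousAt
      have hx0 : deriv (deriv (fun x : ℝ => w ((x:ℂ) + (z₁.im:ℂ) * Complex.I))) z₁.re ≤ 0 :=
        second_deriv_nonpos_of_isLocalMax_aux hwxC2 hmaxwx
      have hxdecomp : deriv (deriv (fun x : ℝ => w ((x:ℂ) + (z₁.im:ℂ) * Complex.I))) z₁.re
          = deriv (deriv (fun x : ℝ => Real.log (ρ ((x:ℂ) + (z₁.im:ℂ) * Complex.I)))) z₁.re
            + (-2*(r^2 - z₁.im^2) - 2*z₁.re^2) / ((r^2 - z₁.im^2) - z₁.re^2)^2 := by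
        rw [hwx, ← deriv_deriv_log_sub_sq_aux (r^2 - z₁.im^2) ha2x]
        exact deriv_deriv_add_aux hlogρx hgx
      -- y-direction
      have hφy : ContDiff ℝ 2 (fun y : ℝ => ((z₁.re:ℝ):ℂ) + (y:ℂ) * Complex.I) :=
        contDiff_const.add (Complex.ofRealCLM.contDiff.mul contDiff_const)
      have hwy : (fun y : ℝ => w (((z₁.re:ℝ):ℂ) + (y:ℂ) * Complex.I))
          = fun y : ℝ => Real.log (ρ (((z₁.re:ℝ):ℂ) + (y:ℂ) * Complex.I))
              + Real.log ((r^2 - z₁.re^2) - y^2) := by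
        funext y
        simp only [hwdef]
        have : r^2 - (((z₁.re:ℝ):ℂ) + (y:ℂ) * Complex.I).re^2
            - (((z₁.re:ℝ):ℂ) + (y:ℂ) * Complex.I).im^2 = (r^2 - z₁.re^2) - y^2 := by
          simp
        rw [this]
      have hlogρy : ContDiffAt ℝ 2
          (fun y : ℝ => Real.log (ρ (((z₁.re:ℝ):ℂ) + (y:ℂ) * Complex.I))) z₁.im := by
        have h' : ContDiffAt ℝ 2 (fun ζ : ℂ => Real.log (ρ ζ))
            (((z₁.re : ℝ):ℂ) + ((z₁.im:ℝ):ℂ) * Complex.I) := by rw [hφxa]; exact hlogρ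
        exact h'.comp z₁.im hφy.contDiffAt
      have ha2y : z₁.im^2 < r^2 - z₁.re^2 := by nlinarith [habs2 z₁]
      have hgy : ContDiffAt ℝ 2 (fun y : ℝ => Real.log ((r^2 - z₁.re^2) - y^2)) z₁.im := by
        have h0 : (r^2 - z₁.re^2) - z₁.im^2 ≠ 0 := by nlinarith
        exact (Real.contDiffAt_log.2 h0).comp z₁.im
          ((contDiff_const.sub (contDiff_id.pow 2)).contDiffAt)
      have hwyC2 : ContDiffAt ℝ 2 (fun y : ℝ => w (((z₁.re:ℝ):ℂ) + (y:ℂ) * Complex.I)) z₁.im := by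
        rw [hwy]; exact hlogρy.add hgy
      have hmaxwy : IsLocalMax (fun y : ℝ => w (((z₁.re:ℝ):ℂ) + (y:ℂ) * Complex.I)) z₁.im := by
        have h' : IsLocalMax w (((z₁.re : ℝ):ℂ) + ((z₁.im:ℝ):ℂ) * Complex.I) := by
          rw [hφxa]; exact hmaxw
        exact IsLocalMax.comp_continuous (g := fun y : ℝ => ((z₁.re:ℝ):ℂ) + (y:ℂ) * Complex.I)
          (b := z₁.im) h' hφy.continuous.continuousAt
      have hy0 : deriv (deriv (fun y : ℝ => w (((z₁.re:ℝ):ℂ) + (y:ℂ) * Complex.I))) z₁.im ≤ 0 :=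
        second_deriv_nonpos_of_isLocalMax_aux hwyC2 hmaxwy
      have hydecomp : deriv (deriv (fun y : ℝ => w (((z₁.re:ℝ):ℂ) + (y:ℂ) * Complex.I))) z₁.im
          = deriv (deriv (fun y : ℝ => Real.log (ρ (((z₁.re:ℝ):ℂ) + (y:ℂ) * Complex.I)))) z₁.im
            + (-2*(r^2 - z₁.re^2) - 2*z₁.im^2) / ((r^2 - z₁.re^2) - z₁.im^2)^2 := by
        rw [hwy, ← deriv_deriv_log_sub_sq_aux (r^2 - z₁.re^2) ha2y]
        exact deriv_deriv_add_aux hlogρy hgy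
      -- assemble
      have hPLw : planarLaplacian (fun ζ => Real.log (ρ ζ)) z₁
          = deriv (deriv (fun x : ℝ => Real.log (ρ ((x:ℂ) + (z₁.im:ℂ) * Complex.I)))) z₁.re
            + deriv (deriv
                (fun y : ℝ => Real.log (ρ (((z₁.re:ℝ):ℂ) + (y:ℂ) * Complex.I)))) z₁.im := rfl
      have e1 : (r^2 - z₁.im^2) - z₁.re^2 = r^2 - ‖z₁‖^2 := by rw [habs2 z₁]; ring
      have e2 : (r^2 - z₁.re^2) - z₁.im^2 = r^2 - ‖z₁‖^2 := by rw [habs2 z₁]; ring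
      rw [e1] at hxdecomp
      rw [e2] at hydecomp
      have hsum : ρ z₁^2
          + ((-2*(r^2 - z₁.im^2) - 2*z₁.re^2) / (r^2 - ‖z₁‖^2)^2
            + (-2*(r^2 - z₁.re^2) - 2*z₁.im^2) / (r^2 - ‖z₁‖^2)^2) ≤ 0 := by
        have h := hL
        rw [hPLw] at h
        linarith
      have hgsum : (-2*(r^2 - z₁.im^2) - 2*z₁.re^2) / (r^2 - ‖z₁‖^2)^2
          + (-2*(r^2 - z₁.re^2) - 2*z₁.im^2) / (r^2 - ‖z₁‖^2)^2
          = -(4*r^2 / (r^2 - ‖z₁‖^2)^2) := by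
        rw [← add_div, ← neg_div]
        congr 1; ring
      rw [hgsum] at hsum
      have hlt : (2*r / (r^2 - ‖z₁‖^2))^2 < ρ z₁^2 := by
        have h2rs : 0 ≤ 2*r / (r^2 - ‖z₁‖^2) := by positivity
        exact pow_lt_pow_left₀ hρ₁big h2rs two_ne_zero
      have heq : (2*r / (r^2 - ‖z₁‖^2))^2 = 4*r^2 / (r^2 - ‖z₁‖^2)^2 := by
        rw [div_pow]; norm_num; ring_nf
      rw [heq] at hlt
      linarith
  -- let r → 1⁻
  have hc : (0:ℝ) < 1 - ‖z‖^2 := by nlinarith [norm_nonneg z]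
  have htend : Tendsto (fun r : ℝ => 2*r / (r^2 - ‖z‖^2)) (𝓝[<] (1:ℝ))
      (𝓝 (2 / (1 - ‖z‖^2))) := by
    have hca : ContinuousAt (fun r : ℝ => 2*r / (r^2 - ‖z‖^2)) 1 := by
      apply ContinuousAt.div
      · fun_prop
      · fun_prop
      · norm_num; nlinarith
    have h2 := hca.tendsto.mono_left (nhdsWithin_le_nhds (s := Iio (1:ℝ)))
    convert h2 using 2
    norm_num
  have hev : ∀ᶠ r in 𝓝[<] (1:ℝ), ρ z ≤ 2*r / (r^2 - ‖z‖^2) := by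
    filter_upwards [(eventually_gt_nhds hz1).filter_mono nhdsWithin_le_nhds,
      self_mem_nhdsWithin] with r h1 h2
    exact key r h1 h2
  exact ge_of_tendsto htend hev
end

section
/- Heins' rigidity: if ρ is a conformal metric density on 𝔻 with curvature ≤ −1 everywhere (where ρ > 0), and there exists z₀ ∈ 𝔻 with ρ(z₀) = 2/(1 − |z₀|²), then ρ(z) = 2/(1 − |z|²) for all z ∈ 𝔻. -/
open Metric Complex

open Filter Topology

lemma contDiffAt_two_aux {F : ℝ → ℝ} {a : ℝ} (hF : ContDiffAt ℝ 2 F a) :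
    (∀ᶠ x in 𝓝 a, DifferentiableAt ℝ F x) ∧ ContDiffAt ℝ 1 (deriv F) a := by
  obtain ⟨u, hu, hFu⟩ := hF.contDiffOn (le_refl 2) (by simp)
  obtain ⟨t, htu, hto, hat⟩ := _root_.mem_nhds_iff.1 hu
  have hFt : ContDiffOn ℝ 2 F t := hFu.mono htu
  have h2 : ContDiffOn ℝ (1 + 1) F t := by norm_num; exact hFt
  rw [contDiffOn_succ_iff_deriv_of_isOpen hto] at h2
  have hdiff : ∀ᶠ x in 𝓝 a, DifferentiableAt ℝ F x := by
    filter_upwards [hto.mem_nhds hat] with x hx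
    exact (h2.1 x hx).differentiableAt (hto.mem_nhds hx)
  refine ⟨hdiff, ?_⟩
  exact h2.2.2.contDiffAt (hto.mem_nhds hat)

lemma differentiableAt_deriv_of_contDiffAt_two {F : ℝ → ℝ} {a : ℝ}
    (hF : ContDiffAt ℝ 2 F a) : DifferentiableAt ℝ (deriv F) a :=
  (contDiffAt_two_aux hF).2.differentiableAt one_ne_zero

/-- Second derivative test at a local max. -/
lemma deriv2_nonpos_of_isLocalMax {F : ℝ → ℝ} {a : ℝ}
    (hF : ContDiffAt ℝ 2 F a) (hmax : IsLocalMax F a) : deriv (deriv F) a ≤ 0 := by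
  by_contra hpos
  push_neg at hpos
  have hd0 : deriv F a = 0 := hmax.deriv_eq_zero
  have hdd : HasDerivAt (deriv F) (deriv (deriv F) a) a :=
    (differentiableAt_deriv_of_contDiffAt_two hF).hasDerivAt
  have hev : ∀ᶠ x in 𝓝[≠] a, 0 < slope (deriv F) a x :=
    (hasDerivAt_iff_tendsto_slope.1 hdd) (Ioi_mem_nhds hpos)
  rw [eventually_nhdsWithin_iff] at hev
  have hdiffev := (contDiffAt_two_aux hF).1
  obtain ⟨δ, hδ, hδprop⟩ := Metric.eventually_nhds_iff.1 (hdiffev.and (hev.and hmax))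
  have hdist : ∀ x : ℝ, a ≤ x → x ≤ a + δ/2 → dist x a < δ := by
    intro x h1 h2
    rw [Real.dist_eq, abs_lt]
    constructor <;> linarith
  have hcont : ContinuousOn F (Set.Icc a (a + δ/2)) := by
    intro x hx
    rw [Set.mem_Icc] at hx
    exact ((hδprop (hdist x hx.1 hx.2)).1.continuousAt).continuousWithinAt
  have hderiv : ∀ x ∈ interior (Set.Icc a (a + δ/2)), 0 < deriv F x := by
    intro x hx
    rw [interior_Icc, Set.mem_Ioo] at hx
    have hxne : (x : ℝ) ∈ ({a}ᶜ : Set ℝ) := by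
      simp only [Set.mem_compl_iff, Set.mem_singleton_iff]
      exact ne_of_gt hx.1
    have hs := (hδprop (hdist x hx.1.le hx.2.le)).2.1 hxne
    rw [slope_def_field, hd0, sub_zero] at hs
    have hxa : 0 < x - a := by linarith [hx.1]
    have := (div_pos_iff.1 hs)
    rcases this with ⟨h1, _⟩ | ⟨_, h2⟩
    · exact h1
    · linarith
  have hmono := strictMonoOn_of_deriv_pos (convex_Icc a (a + δ/2)) hcont hderiv
  have hab : a < a + δ/2 := by linarith
  have hlt : F a < F (a + δ/2) :=
    hmono (Set.left_mem_Icc.2 hab.le) (Set.right_mem_Icc.2 hab.le) hab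
  have hle : F (a + δ/2) ≤ F a := (hδprop (hdist _ hab.le le_rfl)).2.2
  linarith

lemma deriv2_nonneg_of_isLocalMin {F : ℝ → ℝ} {a : ℝ}
    (hF : ContDiffAt ℝ 2 F a) (hmin : IsLocalMin F a) : 0 ≤ deriv (deriv F) a := by
  have h := deriv2_nonpos_of_isLocalMax (hF.neg) hmin.neg
  have e1 : deriv (fun x => -F x) = fun x => -(deriv F x) := by
    funext x; exact deriv.neg
  rw [e1] at h
  have e2 : deriv (fun x => -(deriv F x)) a = -(deriv (deriv F) a) := deriv.neg
  rw [e2] at h; linarith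
section part2
variable {g f : ℂ → ℝ} {z : ℂ}

lemma phiRe_contDiff (b : ℝ) : ContDiff ℝ 2 (fun x : ℝ => (x : ℂ) + b * Complex.I) :=
  Complex.ofRealCLM.contDiff.add contDiff_const

lemma phiIm_contDiff (b : ℝ) : ContDiff ℝ 2 (fun y : ℝ => (b : ℂ) + y * Complex.I) :=
  contDiff_const.add (Complex.ofRealCLM.contDiff.mul contDiff_const)

lemma sliceRe_contDiffAt (hg : ContDiffAt ℝ 2 g z) :
    ContDiffAt ℝ 2 (fun x : ℝ => g (x + z.im * Complex.I)) z.re := by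
  have h1 : ContDiffAt ℝ 2 g ((fun x : ℝ => (x : ℂ) + z.im * Complex.I) z.re) := by
    simpa [Complex.re_add_im] using hg
  exact h1.comp z.re ((phiRe_contDiff z.im).contDiffAt)

lemma sliceIm_contDiffAt (hg : ContDiffAt ℝ 2 g z) :
    ContDiffAt ℝ 2 (fun y : ℝ => g (z.re + y * Complex.I)) z.im := by
  have h1 : ContDiffAt ℝ 2 g ((fun y : ℝ => (z.re : ℂ) + y * Complex.I) z.im) := by
    simpa [Complex.re_add_im] using hg
  exact h1.comp z.im ((phiIm_contDiff z.re).contDiffAt)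

lemma tendsto_phiRe (z : ℂ) :
    Tendsto (fun x : ℝ => (x : ℂ) + z.im * Complex.I) (𝓝 z.re) (𝓝 z) := by
  have hc : Continuous (fun x : ℝ => (x : ℂ) + z.im * Complex.I) := by fun_prop
  simpa [Complex.re_add_im] using hc.tendsto z.re

lemma tendsto_phiIm (z : ℂ) :
    Tendsto (fun y : ℝ => (z.re : ℂ) + y * Complex.I) (𝓝 z.im) (𝓝 z) := by
  have hc : Continuous (fun y : ℝ => (z.re : ℂ) + y * Complex.I) := by fun_prop
  simpa [Complex.re_add_im] using hc.tendsto z.im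
end part2

section part3
variable {g f : ℂ → ℝ} {z : ℂ}

lemma planarLaplacian_nonpos_of_isLocalMax (hg : ContDiffAt ℝ 2 g z)
    (hmax : IsLocalMax g z) : planarLaplacian g z ≤ 0 := by
  have h1 : IsLocalMax (fun x : ℝ => g (x + z.im * Complex.I)) z.re := by
    have := (tendsto_phiRe z).eventually hmax
    simpa [IsLocalMax, IsMaxFilter, Complex.re_add_im] using this
  have h2 : IsLocalMax (fun y : ℝ => g (z.re + y * Complex.I)) z.im := by
    have := (tendsto_phiIm z).eventually hmax
    simpa [IsLocalMax, IsMaxFilter, Complex.re_add_im] using this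
  have e1 := deriv2_nonpos_of_isLocalMax (sliceRe_contDiffAt hg) h1
  have e2 := deriv2_nonpos_of_isLocalMax (sliceIm_contDiffAt hg) h2
  unfold planarLaplacian; linarith

lemma planarLaplacian_nonneg_of_isLocalMin (hg : ContDiffAt ℝ 2 g z)
    (hmin : IsLocalMin g z) : 0 ≤ planarLaplacian g z := by
  have h1 : IsLocalMin (fun x : ℝ => g (x + z.im * Complex.I)) z.re := by
    have := (tendsto_phiRe z).eventually hmin
    simpa [IsLocalMin, IsMinFilter, Complex.re_add_im] using this
  have h2 : IsLocalMin (fun y : ℝ => g (z.re + y * Complex.I)) z.im := by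
    have := (tendsto_phiIm z).eventually hmin
    simpa [IsLocalMin, IsMinFilter, Complex.re_add_im] using this
  have e1 := deriv2_nonneg_of_isLocalMin (sliceRe_contDiffAt hg) h1
  have e2 := deriv2_nonneg_of_isLocalMin (sliceIm_contDiffAt hg) h2
  unfold planarLaplacian; linarith

lemma planarLaplacian_congr (h : f =ᶠ[𝓝 z] g) :
    planarLaplacian f z = planarLaplacian g z := by
  have h1 : (fun x : ℝ => f (x + z.im * Complex.I)) =ᶠ[𝓝 z.re]
      (fun x : ℝ => g (x + z.im * Complex.I)) := (tendsto_phiRe z).eventually h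
  have h2 : (fun y : ℝ => f (z.re + y * Complex.I)) =ᶠ[𝓝 z.im]
      (fun y : ℝ => g (z.re + y * Complex.I)) := (tendsto_phiIm z).eventually h
  unfold planarLaplacian
  rw [(h1.deriv).deriv_eq, (h2.deriv).deriv_eq]

lemma deriv2_add1d {F G : ℝ → ℝ} {a : ℝ} (hF : ContDiffAt ℝ 2 F a) (hG : ContDiffAt ℝ 2 G a) :
    deriv (deriv (fun x => F x + G x)) a = deriv (deriv F) a + deriv (deriv G) a := by
  have hev : deriv (fun x => F x + G x) =ᶠ[𝓝 a] fun x => deriv F x + deriv G x := by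
    filter_upwards [(contDiffAt_two_aux hF).1, (contDiffAt_two_aux hG).1] with x h1 h2
    exact deriv_add h1 h2
  rw [hev.deriv_eq]
  exact deriv_add (differentiableAt_deriv_of_contDiffAt_two hF)
    (differentiableAt_deriv_of_contDiffAt_two hG)

lemma deriv2_sub1d {F G : ℝ → ℝ} {a : ℝ} (hF : ContDiffAt ℝ 2 F a) (hG : ContDiffAt ℝ 2 G a) :
    deriv (deriv (fun x => F x - G x)) a = deriv (deriv F) a - deriv (deriv G) a := by
  have hev : deriv (fun x => F x - G x) =ᶠ[𝓝 a] fun x => deriv F x - deriv G x := by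
    filter_upwards [(contDiffAt_two_aux hF).1, (contDiffAt_two_aux hG).1] with x h1 h2
    exact deriv_sub h1 h2
  rw [hev.deriv_eq]
  exact deriv_sub (differentiableAt_deriv_of_contDiffAt_two hF)
    (differentiableAt_deriv_of_contDiffAt_two hG)

lemma planarLaplacian_add (hf : ContDiffAt ℝ 2 f z) (hg : ContDiffAt ℝ 2 g z) :
    planarLaplacian (fun w => f w + g w) z = planarLaplacian f z + planarLaplacian g z := by
  unfold planarLaplacian
  rw [deriv2_add1d (sliceRe_contDiffAt hf) (sliceRe_contDiffAt hg),
      deriv2_add1d (sliceIm_contDiffAt hf) (sliceIm_contDiffAt hg)]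
  ring

lemma planarLaplacian_sub (hf : ContDiffAt ℝ 2 f z) (hg : ContDiffAt ℝ 2 g z) :
    planarLaplacian (fun w => f w - g w) z = planarLaplacian f z - planarLaplacian g z := by
  unfold planarLaplacian
  rw [deriv2_sub1d (sliceRe_contDiffAt hf) (sliceRe_contDiffAt hg),
      deriv2_sub1d (sliceIm_contDiffAt hf) (sliceIm_contDiffAt hg)]
  ring

lemma planarLaplacian_const_mul (c : ℝ) (f : ℂ → ℝ) (z : ℂ) :
    planarLaplacian (fun w => c * f w) z = c * planarLaplacian f z := by
  unfold planarLaplacian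
  have e : ∀ (F : ℝ → ℝ), deriv (fun x => c * F x) = fun x => c * deriv F x := by
    intro F; funext x; exact deriv_const_mul_field c
  rw [show (fun x : ℝ => c * f (↑x + ↑z.im * Complex.I)) = (fun x => c * (fun t : ℝ => f (↑t + ↑z.im * Complex.I)) x) from rfl]
  rw [e, e]
  rw [show (fun y : ℝ => c * f (↑z.re + ↑y * Complex.I)) = (fun y => c * (fun t : ℝ => f (↑z.re + ↑t * Complex.I)) y) from rfl]
  rw [e, e]
  ring

lemma planarLaplacian_sub_const (f : ℂ → ℝ) (k : ℝ) (z : ℂ) :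
    planarLaplacian (fun w => f w - k) z = planarLaplacian f z := by
  unfold planarLaplacian
  have e : ∀ (F : ℝ → ℝ), deriv (fun x => F x - k) = deriv F := by
    intro F; funext x; exact deriv_sub_const k
  rw [show (fun x : ℝ => f (↑x + ↑z.im * Complex.I) - k) = (fun x => (fun t : ℝ => f (↑t + ↑z.im * Complex.I)) x - k) from rfl]
  rw [e]
  rw [show (fun y : ℝ => f (↑z.re + ↑y * Complex.I) - k) = (fun y => (fun t : ℝ => f (↑z.re + ↑t * Complex.I)) y - k) from rfl]
  rw [e]
end part3

section part4

/-- first derivative of x ↦ log (c - x²). -/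
lemma deriv_log_quad_ev {c a : ℝ} (h : 0 < c - a^2) :
    deriv (fun x : ℝ => Real.log (c - x^2)) =ᶠ[𝓝 a] fun x => (-(2*x))/(c - x^2) := by
  have hopen : IsOpen {x : ℝ | 0 < c - x^2} := by
    have : Continuous (fun x : ℝ => c - x^2) := by fun_prop
    exact isOpen_lt continuous_const this
  filter_upwards [hopen.mem_nhds h] with x hx
  have hD : HasDerivAt (fun x : ℝ => c - x^2) (0 - 2*x^1) x :=
    (hasDerivAt_const x c).sub (by simpa using hasDerivAt_pow 2 x)
  have := (hD.log (ne_of_gt hx)).deriv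
  simpa using this

lemma deriv2_log_quad {c a : ℝ} (h : 0 < c - a^2) :
    deriv (deriv (fun x : ℝ => Real.log (c - x^2))) a
      = (-2*(c - a^2) - 4*a^2)/(c - a^2)^2 := by
  rw [(deriv_log_quad_ev h).deriv_eq]
  have hnum : HasDerivAt (fun x : ℝ => -(2*x)) (-2) a := by
    simpa using ((hasDerivAt_id a).const_mul (2:ℝ)).fun_neg
  have hden : HasDerivAt (fun x : ℝ => c - x^2) (-(2*a)) a := by
    have := (hasDerivAt_const a c).fun_sub (by simpa using hasDerivAt_pow 2 a)
    simpa using this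
  have := (hnum.fun_div hden (ne_of_gt h)).deriv
  rw [this]; field_simp; ring

lemma contDiffAt_log_quad {r : ℝ} {z : ℂ} (h : ‖z‖ < r) :
    ContDiffAt ℝ 2 (fun w : ℂ => Real.log (r^2 - ‖w‖^2)) z := by
  have habs : ∀ w : ℂ, ‖w‖ ^ 2 = w.re^2 + w.im^2 := by
    intro w; rw [Complex.sq_norm, Complex.normSq_apply]; ring
  have hinner : ContDiffAt ℝ 2 (fun w : ℂ => r^2 - (w.re^2 + w.im^2)) z := by
    apply ContDiffAt.sub contDiffAt_const
    exact ((Complex.reCLM.contDiff.pow 2).add (Complex.imCLM.contDiff.pow 2)).contDiffAt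
  have hne : r^2 - (z.re^2 + z.im^2) ≠ 0 := by
    have h0 : (0:ℝ) ≤ ‖z‖ := (norm_nonneg z)
    have : ‖z‖ ^2 < r^2 := by nlinarith
    rw [habs z] at this; linarith
  have := hinner.log hne
  refine this.congr_of_eventuallyEq ?_
  filter_upwards with w
  rw [habs w]

lemma laplacian_log_quad {r : ℝ} {z : ℂ} (h : ‖z‖ < r) (hr : 0 < r) :
    planarLaplacian (fun w : ℂ => Real.log (r^2 - ‖w‖^2)) z
      = -4*r^2/(r^2 - ‖z‖^2)^2 := by
  have habs : ∀ w : ℂ, ‖w‖ ^ 2 = w.re^2 + w.im^2 := by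
    intro w; rw [Complex.sq_norm, Complex.normSq_apply]; ring
  have hzlt : z.re^2 + z.im^2 < r^2 := by
    have h0 : (0:ℝ) ≤ ‖z‖ := (norm_nonneg z)
    have : ‖z‖ ^2 < r^2 := by nlinarith
    rwa [habs z] at this
  unfold planarLaplacian
  have e1 : (fun x : ℝ => Real.log (r^2 - ‖↑x + ↑z.im * Complex.I‖^2))
      = fun x : ℝ => Real.log ((r^2 - z.im^2) - x^2) := by
    funext x
    rw [habs]
    norm_num [Complex.add_re, Complex.add_im, Complex.ofReal_re, Complex.ofReal_im,
      Complex.mul_re, Complex.mul_im, Complex.I_re, Complex.I_im]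
    ring_nf
  have e2 : (fun y : ℝ => Real.log (r^2 - ‖↑z.re + ↑y * Complex.I‖^2))
      = fun y : ℝ => Real.log ((r^2 - z.re^2) - y^2) := by
    funext y
    rw [habs]
    norm_num [Complex.add_re, Complex.add_im, Complex.ofReal_re, Complex.ofReal_im,
      Complex.mul_re, Complex.mul_im, Complex.I_re, Complex.I_im]
    ring_nf
  rw [e1, e2]
  have h1 : 0 < (r^2 - z.im^2) - z.re^2 := by linarith
  have h2 : 0 < (r^2 - z.re^2) - z.im^2 := by linarith
  rw [deriv2_log_quad h1, deriv2_log_quad h2, habs z]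
  have hQ : (r^2 - z.im^2) - z.re^2 = r^2 - (z.re^2 + z.im^2) := by ring
  have hQ2 : (r^2 - z.re^2) - z.im^2 = r^2 - (z.re^2 + z.im^2) := by ring
  rw [hQ, hQ2]
  have hQpos : (0:ℝ) < r^2 - (z.re^2+z.im^2) := by linarith
  field_simp
  ring
end part4

section part5

lemma hasDerivAt_exp_quad (α c p1 : ℝ) (x : ℝ) :
    HasDerivAt (fun x : ℝ => Real.exp (-(α * ((x - p1)^2 + c))))
      (Real.exp (-(α * ((x - p1)^2 + c))) * (-(α * (2*(x - p1))))) x := by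
  have hbase : HasDerivAt (fun x : ℝ => x - p1) 1 x := (hasDerivAt_id x).sub_const p1
  have hsq : HasDerivAt (fun x : ℝ => (x - p1)^2) (2*(x - p1)) x := by
    simpa using hbase.fun_pow 2
  have hinner : HasDerivAt (fun x : ℝ => -(α * ((x - p1)^2 + c))) (-(α * (2*(x - p1)))) x := by
    simpa using ((hsq.add_const c).const_mul α).fun_neg
  simpa using hinner.exp

lemma deriv_exp_quad (α c p1 : ℝ) :
    deriv (fun x : ℝ => Real.exp (-(α * ((x - p1)^2 + c))))
      = fun x => (-(α * (2*(x - p1)))) * Real.exp (-(α * ((x - p1)^2 + c))) := by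
  funext x
  rw [(hasDerivAt_exp_quad α c p1 x).deriv]; ring

lemma deriv2_exp_quad (α c p1 a : ℝ) :
    deriv (deriv (fun x : ℝ => Real.exp (-(α * ((x - p1)^2 + c))))) a
      = (4*α^2*(a - p1)^2 - 2*α) * Real.exp (-(α * ((a - p1)^2 + c))) := by
  rw [deriv_exp_quad]
  have h1 : HasDerivAt (fun x : ℝ => -(α * (2*(x - p1)))) (-(α*2)) a := by
    simpa using ((((hasDerivAt_id a).sub_const p1).const_mul 2).const_mul α).fun_neg
  have := (h1.fun_mul (hasDerivAt_exp_quad α c p1 a)).deriv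
  rw [this]; ring

lemma laplacian_barrier (α : ℝ) (p z : ℂ) :
    planarLaplacian (fun w : ℂ => Real.exp (-(α * ((w.re - p.re)^2 + (w.im - p.im)^2)))) z
      = (4*α^2*((z.re - p.re)^2 + (z.im - p.im)^2) - 4*α)
        * Real.exp (-(α * ((z.re - p.re)^2 + (z.im - p.im)^2))) := by
  unfold planarLaplacian
  have e1 : (fun x : ℝ => Real.exp (-(α * (((↑x + ↑z.im * Complex.I).re - p.re)^2
      + ((↑x + ↑z.im * Complex.I).im - p.im)^2))))
      = fun x : ℝ => Real.exp (-(α * ((x - p.re)^2 + (z.im - p.im)^2))) := by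
    funext x
    norm_num [Complex.add_re, Complex.add_im, Complex.ofReal_re, Complex.ofReal_im,
      Complex.mul_re, Complex.mul_im, Complex.I_re, Complex.I_im]
  have e2 : (fun y : ℝ => Real.exp (-(α * (((↑z.re + ↑y * Complex.I).re - p.re)^2
      + ((↑z.re + ↑y * Complex.I).im - p.im)^2))))
      = fun y : ℝ => Real.exp (-(α * ((y - p.im)^2 + (z.re - p.re)^2))) := by
    funext y
    norm_num [Complex.add_re, Complex.add_im, Complex.ofReal_re, Complex.ofReal_im,
      Complex.mul_re, Complex.mul_im, Complex.I_re, Complex.I_im]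
    left; ring
  rw [e1, e2, deriv2_exp_quad, deriv2_exp_quad]
  have harg1 : -(α * ((z.re - p.re)^2 + (z.im - p.im)^2))
      = -(α * ((z.im - p.im)^2 + (z.re - p.re)^2)) := by ring
  rw [harg1]
  ring

lemma contDiff_barrier (α : ℝ) (p : ℂ) :
    ContDiff ℝ 2 (fun w : ℂ => Real.exp (-(α * ((w.re - p.re)^2 + (w.im - p.im)^2)))) := by
  apply ContDiff.exp
  apply ContDiff.neg
  apply ContDiff.mul contDiff_const
  apply ContDiff.add
  · exact (Complex.reCLM.contDiff.sub contDiff_const).pow 2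
  · exact (Complex.imCLM.contDiff.sub contDiff_const).pow 2
end part5

section part6

lemma ahlfors_schwarz (ρ : ℂ → ℝ)
    (hnonneg : ∀ z ∈ ball (0 : ℂ) 1, 0 ≤ ρ z)
    (hcont : ContinuousOn ρ (ball (0 : ℂ) 1))
    (hC2 : ∀ z ∈ ball (0 : ℂ) 1, 0 < ρ z → ContDiffAt ℝ 2 ρ z)
    (hcurv2 : ∀ z ∈ ball (0 : ℂ) 1, 0 < ρ z →
      ρ z ^ 2 ≤ planarLaplacian (fun w => Real.log (ρ w)) z) :
    ∀ z ∈ ball (0 : ℂ) 1, ρ z * (1 - ‖z‖ ^ 2) ≤ 2 := by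
  have key : ∀ r : ℝ, 0 < r → r < 1 →
      ∀ z ∈ closedBall (0 : ℂ) r, ρ z * (r^2 - ‖z‖ ^ 2) ≤ 2*r := by
    intro r hr0 hr1
    have hsub : closedBall (0:ℂ) r ⊆ ball (0:ℂ) 1 := closedBall_subset_ball hr1
    have hGcont : ContinuousOn (fun w => ρ w * (r^2 - ‖w‖ ^ 2)) (closedBall (0:ℂ) r) := by
      apply ContinuousOn.mul (hcont.mono hsub)
      exact (continuous_const.sub ((continuous_norm).pow 2)).continuousOn
    obtain ⟨p, hpmem, hpmax⟩ := (isCompact_closedBall (0:ℂ) r).exists_isMaxOn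
      ⟨0, by simp [hr0.le]⟩ hGcont
    suffices hGp : ρ p * (r^2 - ‖p‖ ^ 2) ≤ 2*r by
      intro z hz
      exact le_trans (hpmax hz) hGp
    by_cases hGp0 : ρ p * (r^2 - ‖p‖ ^ 2) ≤ 0
    · linarith
    push_neg at hGp0
    have hfac : 0 ≤ r^2 - ‖p‖ ^ 2 := by
      have := mem_closedBall.1 hpmem
      simp only [Complex.dist_eq, sub_zero] at this
      nlinarith [norm_nonneg p]
    have hρp : 0 < ρ p := by
      rcases lt_or_ge 0 (ρ p) with h | h
      · exact h
      · nlinarith [mul_nonpos_of_nonpos_of_nonneg h hfac]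
    have hpr : ‖p‖ < r := by
      rcases lt_or_ge (‖p‖) r with h | h
      · exact h
      · exfalso
        have : r^2 - ‖p‖ ^2 ≤ 0 := by nlinarith [norm_nonneg p]
        nlinarith [mul_nonpos_of_nonneg_of_nonpos hρp.le this]
    have hp1 : p ∈ ball (0:ℂ) 1 := hsub hpmem
    have hρcontp : ContinuousAt ρ p := hcont.continuousAt (isOpen_ball.mem_nhds hp1)
    have hpfac : 0 < r^2 - ‖p‖ ^ 2 := by nlinarith [norm_nonneg p]
    have hLmax : IsLocalMax (fun w => Real.log (ρ w) + Real.log (r^2 - ‖w‖ ^ 2)) p := by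
      have hev1 : ∀ᶠ w in 𝓝 p, 0 < ρ w := continuousAt_const.eventually_lt hρcontp hρp
      have hev2 : ∀ᶠ w in 𝓝 p, w ∈ ball (0:ℂ) r :=
        isOpen_ball.mem_nhds (mem_ball_zero_iff.2 hpr)
      filter_upwards [hev1, hev2] with w hw1 hw2
      have hwr : ‖w‖ < r := mem_ball_zero_iff.1 hw2
      have hwfac : 0 < r^2 - ‖w‖ ^ 2 := by nlinarith [norm_nonneg w]
      have hGw : ρ w * (r^2 - ‖w‖ ^ 2) ≤ ρ p * (r^2 - ‖p‖ ^ 2) :=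
        hpmax (ball_subset_closedBall hw2)
      have hGwpos : 0 < ρ w * (r^2 - ‖w‖ ^ 2) := mul_pos hw1 hwfac
      have e1 : Real.log (ρ w) + Real.log (r^2 - ‖w‖ ^ 2)
          = Real.log (ρ w * (r^2 - ‖w‖ ^ 2)) :=
        (Real.log_mul (ne_of_gt hw1) (ne_of_gt hwfac)).symm
      have e2 : Real.log (ρ p) + Real.log (r^2 - ‖p‖ ^ 2)
          = Real.log (ρ p * (r^2 - ‖p‖ ^ 2)) :=
        (Real.log_mul (ne_of_gt hρp) (ne_of_gt hpfac)).symm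
      show Real.log (ρ w) + Real.log (r^2 - ‖w‖ ^ 2)
          ≤ Real.log (ρ p) + Real.log (r^2 - ‖p‖ ^ 2)
      rw [e1, e2]
      exact Real.log_le_log hGwpos hGw
    have hLC2 : ContDiffAt ℝ 2 (fun w => Real.log (ρ w) + Real.log (r^2 - ‖w‖ ^ 2)) p :=
      ((hC2 p hp1 hρp).log (ne_of_gt hρp)).add (contDiffAt_log_quad hpr)
    have h0 : planarLaplacian (fun w => Real.log (ρ w) + Real.log (r^2 - ‖w‖ ^ 2)) p ≤ 0 :=
      planarLaplacian_nonpos_of_isLocalMax hLC2 hLmax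
    have hsplit := planarLaplacian_add ((hC2 p hp1 hρp).log (ne_of_gt hρp)) (contDiffAt_log_quad hpr)
    rw [hsplit, laplacian_log_quad hpr hr0] at h0
    have hcurvp := hcurv2 p hp1 hρp
    have hrw : -4*r^2/(r^2 - ‖p‖ ^2)^2 = -(4*r^2/(r^2 - ‖p‖ ^2)^2) := by
      ring
    rw [hrw] at h0
    have h1 : ρ p ^ 2 ≤ 4*r^2/(r^2 - ‖p‖ ^2)^2 := by linarith
    have hkey : ρ p ^2 * (r^2 - ‖p‖ ^2)^2 ≤ 4*r^2 := by
      calc ρ p ^2 * (r^2 - ‖p‖ ^2)^2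
          ≤ (4*r^2/(r^2 - ‖p‖ ^2)^2) * (r^2 - ‖p‖ ^2)^2 :=
            mul_le_mul_of_nonneg_right h1 (by positivity)
        _ = 4*r^2 := by field_simp
    nlinarith [mul_pos hρp hpfac]
  intro z hz
  have hz1 : ‖z‖ < 1 := mem_ball_zero_iff.1 hz
  have habs0 : (0:ℝ) ≤ ‖z‖ := norm_nonneg z
  have hΦcont : Continuous (fun r : ℝ => 2*r - ρ z * (r^2 - ‖z‖ ^2)) := by fun_prop
  have hev : ∀ᶠ r in 𝓝[<] (1:ℝ), 0 ≤ 2*r - ρ z * (r^2 - ‖z‖ ^2) := by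
    filter_upwards [Ioo_mem_nhdsLT_of_mem (⟨hz1, le_rfl⟩ : (1:ℝ) ∈ Set.Ioc (‖z‖) 1)]
      with r hr
    have h1 : 0 < r := lt_of_le_of_lt habs0 hr.1
    have := key r h1 hr.2 z (by simpa [Complex.dist_eq] using hr.1.le)
    linarith
  have htend : Filter.Tendsto (fun r : ℝ => 2*r - ρ z * (r^2 - ‖z‖ ^2)) (𝓝[<] (1:ℝ))
      (𝓝 (2*1 - ρ z * (1^2 - ‖z‖ ^2))) :=
    (hΦcont.tendsto 1).mono_left nhdsWithin_le_nhds
  have hΦ1 : 0 ≤ 2*1 - ρ z * (1^2 - ‖z‖ ^2) := ge_of_tendsto htend hev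
  nlinarith
end part6

section part7

lemma right_deriv_nonneg {g : ℝ → ℝ} {L δ : ℝ} (hδ : 0 < δ)
    (hg : ∀ t ∈ Set.Ioc 0 δ, g 0 ≤ g t) (hd : HasDerivAt g L 0) : 0 ≤ L := by
  have hslope := hasDerivAt_iff_tendsto_slope.1 hd
  have hmono : 𝓝[>] (0:ℝ) ≤ 𝓝[≠] (0:ℝ) :=
    nhdsWithin_mono 0 (fun x hx => ne_of_gt hx)
  have htend : Filter.Tendsto (slope g 0) (𝓝[>] (0:ℝ)) (𝓝 L) := hslope.mono_left hmono
  refine ge_of_tendsto htend ?_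
  filter_upwards [Ioc_mem_nhdsGT_of_mem (⟨le_rfl, hδ⟩ : (0:ℝ) ∈ Set.Ico 0 δ)] with t ht
  rw [slope_def_field]
  have h1 : g 0 ≤ g t := hg t ht
  have h2 : 0 < t - 0 := by simpa using ht.1
  apply div_nonneg (by linarith) (by linarith)

lemma dist_sq_re_im (z p : ℂ) :
    (z.re - p.re)^2 + (z.im - p.im)^2 = dist z p ^ 2 := by
  rw [Complex.dist_eq, Complex.sq_norm, Complex.normSq_apply, Complex.sub_re, Complex.sub_im]
  ring

set_option maxHeartbeats 1000000 in
lemma hopf_core (v : ℂ → ℝ) (Ω : Set ℂ) (hΩ : IsOpen Ω)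
    (hvC2 : ∀ z ∈ Ω, ContDiffAt ℝ 2 v z) (hv0 : ∀ z ∈ Ω, 0 ≤ v z)
    (c : ℝ) (hc : 0 ≤ c) (z₁ : ℂ) (r : ℝ) (hr : 0 < r)
    (hsub : closedBall z₁ (2*r) ⊆ Ω)
    (hΔ : ∀ z ∈ closedBall z₁ (2*r), planarLaplacian v z ≤ c * v z)
    (hz₁ : v z₁ = 0) :
    ∀ p ∈ ball z₁ r, v p = 0 := by
  intro p hp
  by_contra hvp
  have hpc : p ∈ closedBall z₁ (2*r) := by
    have := mem_ball.1 hp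
    exact mem_closedBall.2 (by linarith)
  have hvppos : 0 < v p := lt_of_le_of_ne (hv0 p (hsub hpc)) (Ne.symm hvp)
  have hvcontD : ContinuousOn v (closedBall z₁ (2*r)) := fun z hz =>
    ((hvC2 z (hsub hz)).continuousAt).continuousWithinAt
  -- the zero set
  set K : Set ℂ := closedBall z₁ (2*r) ∩ v ⁻¹' {0} with hK
  have hKclosed : IsClosed K :=
    hvcontD.preimage_isClosed_of_isClosed isClosed_closedBall isClosed_singleton
  have hz₁K : z₁ ∈ K := by
    constructor
    · exact mem_closedBall_self (by linarith)
    · exact hz₁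
  have hKcomp : IsCompact K :=
    (isCompact_closedBall z₁ (2*r)).of_isClosed_subset hKclosed Set.inter_subset_left
  obtain ⟨q, hqK, hqdist⟩ := hKcomp.exists_infDist_eq_dist ⟨z₁, hz₁K⟩ p
  set R := infDist p K with hR
  have hpK : p ∉ K := by
    intro hmem
    exact hvp hmem.2
  have hRpos : 0 < R := (hKclosed.notMem_iff_infDist_pos ⟨z₁, hz₁K⟩).1 hpK
  have hRr : R < r := by
    have h1 : R ≤ dist p z₁ := infDist_le_dist_of_mem hz₁K
    have h2 : dist p z₁ < r := mem_ball.1 hp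
    linarith
  have hqR : dist p q = R := hqdist.symm ▸ rfl
  have hvq : v q = 0 := hqK.2
  -- points strictly inside ball p R
  have hball : ∀ x : ℂ, dist x p < R → x ∈ closedBall z₁ (2*r) ∧ 0 < v x := by
    intro x hx
    have hx1 : x ∈ closedBall z₁ (2*r) := by
      have h2 : dist p z₁ < r := mem_ball.1 hp
      have := dist_triangle x p z₁
      exact mem_closedBall.2 (by linarith)
    refine ⟨hx1, ?_⟩
    rcases eq_or_lt_of_le (hv0 x (hsub hx1)) with h | h
    · exfalso
      have hxK : x ∈ K := ⟨hx1, h.symm⟩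
      have h5 := infDist_le_dist_of_mem (x := p) hxK
      rw [dist_comm p x, ← hR] at h5
      linarith
    · exact h
  have hcbsub : closedBall p R ⊆ closedBall z₁ (2*r) := by
    intro x hx
    have h1 : dist x p ≤ R := mem_closedBall.1 hx
    have h2 : dist p z₁ < r := mem_ball.1 hp
    have := dist_triangle x p z₁
    exact mem_closedBall.2 (by linarith)
  -- inner sphere minimum
  have hsphne : (sphere p (R/2)).Nonempty := NormedSpace.sphere_nonempty.2 (by positivity)
  have hsphsub : sphere p (R/2) ⊆ ball p R := fun x hx => by
    rw [mem_sphere] at hx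
    rw [mem_ball, hx]
    linarith
  obtain ⟨x₀, hx₀mem, hx₀min⟩ := (isCompact_sphere p (R/2)).exists_isMinOn hsphne
    (fun x hx => ((hvC2 x (hsub (hball x (by rw [mem_sphere] at hx; rw [hx]; linarith)).1)).continuousAt).continuousWithinAt)
  set ε := v x₀ with hε
  have hεpos : 0 < ε := (hball x₀ (by rw [mem_sphere] at hx₀mem; rw [hx₀mem]; linarith)).2
  set α := 4/R^2 + 1 + c with hα
  have hαpos : 0 < α := by positivity
  clear_value R ε α
  -- barrier and comparison function
  set W : ℂ → ℝ := fun z => Real.exp (-(α * ((z.re - p.re)^2 + (z.im - p.im)^2))) with hW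
  set h : ℂ → ℝ := fun z => v z - ε * (W z - Real.exp (-(α * R^2))) with hh
  set A : Set ℂ := closedBall p R \ ball p (R/2) with hA
  have hAcomp : IsCompact A := (isCompact_closedBall p R).diff isOpen_ball
  have hqA : q ∈ A := by
    constructor
    · rw [mem_closedBall, dist_comm, hqR]
    · rw [mem_ball, dist_comm, hqR]; intro hcon; exact absurd hcon (by linarith)
  have hAsub : A ⊆ closedBall z₁ (2*r) := fun x hx => hcbsub hx.1
  have hWcont : Continuous W := by
    rw [hW]; fun_prop
  have hhcont : ContinuousOn h A := by
    apply ContinuousOn.sub ((hvcontD.mono hAsub))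
    exact (continuous_const.mul (hWcont.sub continuous_const)).continuousOn
  obtain ⟨m, hmA, hmmin⟩ := hAcomp.exists_isMinOn ⟨q, hqA⟩ hhcont
  have hmcb : m ∈ closedBall z₁ (2*r) := hAsub hmA
  have hmΩ : m ∈ Ω := hsub hmcb
  have he2pos : 0 < Real.exp (-(α * R^2)) := Real.exp_pos _
  -- key : the min of h on A is ≥ 0
  have hmnonneg : 0 ≤ h m := by
    by_contra hneg
    push_neg at hneg
    have hd1 : dist m p ≤ R := mem_closedBall.1 hmA.1
    have hd2 : R/2 ≤ dist m p := by
      by_contra hcon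
      push_neg at hcon
      exact hmA.2 (mem_ball.2 hcon)
    have houter : dist m p < R := by
      rcases eq_or_lt_of_le hd1 with he | hlt
      · exfalso
        have hWm : W m = Real.exp (-(α * R^2)) := by
          simp only [hW]
          rw [dist_sq_re_im m p, he]
        have hhm : h m = v m := by simp only [hh]; rw [hWm]; ring
        rw [hhm] at hneg
        exact absurd hneg (not_lt.2 (hv0 m hmΩ))
      · exact hlt
    have hinner : R/2 < dist m p := by
      rcases eq_or_lt_of_le hd2 with he | hlt
      · exfalso
        have hvm : ε ≤ v m := by rw [hε]; exact hx₀min (mem_sphere.2 he.symm)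
        have hWm1 : W m ≤ 1 := by
          simp only [hW]
          apply Real.exp_le_one_iff.2
          apply neg_nonpos.2
          positivity
        have hhm : h m = v m - ε * (W m - Real.exp (-(α * R^2))) := by simp only [hh]
        nlinarith [mul_le_mul_of_nonneg_left hWm1 hεpos.le,
          mul_pos hεpos he2pos]
      · exact hlt
    -- m is an interior local min
    have hmint : IsLocalMin h m := by
      apply hmmin.isLocalMin
      apply Filter.mem_of_superset
        (((isOpen_ball).sdiff isClosed_closedBall).mem_nhds
          (⟨mem_ball.2 houter, fun hcon => absurd (mem_closedBall.1 hcon) (not_le.2 hinner)⟩ :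
            m ∈ ball p R \ closedBall p (R/2)))
      intro x hx
      exact ⟨ball_subset_closedBall hx.1, fun hcon => hx.2 (ball_subset_closedBall hcon)⟩
    have hWC2 : ContDiffAt ℝ 2 W m := by
      simp only [hW]; exact (contDiff_barrier α p).contDiffAt
    have hg2 : ContDiffAt ℝ 2 (fun z => ε * (W z - Real.exp (-(α * R^2)))) m :=
      contDiffAt_const.mul (hWC2.sub contDiffAt_const)
    have hhC2 : ContDiffAt ℝ 2 h m := (hvC2 m hmΩ).sub hg2
    have h0 : 0 ≤ planarLaplacian h m := planarLaplacian_nonneg_of_isLocalMin hhC2 hmint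
    have hsplit : planarLaplacian h m
        = planarLaplacian v m - planarLaplacian (fun z => ε * (W z - Real.exp (-(α * R^2)))) m :=
      planarLaplacian_sub (hvC2 m hmΩ) hg2
    have hcm : planarLaplacian (fun z => ε * (W z - Real.exp (-(α * R^2)))) m
        = ε * planarLaplacian (fun z => W z - Real.exp (-(α * R^2))) m :=
      planarLaplacian_const_mul ε _ m
    have hsc : planarLaplacian (fun z => W z - Real.exp (-(α * R^2))) m = planarLaplacian W m :=
      planarLaplacian_sub_const W _ m
    have hbar : planarLaplacian W m
        = (4*α^2*(dist m p ^2) - 4*α) * Real.exp (-(α * (dist m p ^2))) := by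
      simp only [hW]
      rw [laplacian_barrier α p m, dist_sq_re_im m p]
    have hWm : W m = Real.exp (-(α * (dist m p ^2))) := by
      simp only [hW]; rw [dist_sq_re_im m p]
    have hΔv : planarLaplacian v m ≤ c * v m := hΔ m hmcb
    have hvm_eq : v m = h m + ε * (W m - Real.exp (-(α * R^2))) := by
      simp only [hh]; ring
    set s := dist m p ^ 2 with hs
    set E := Real.exp (-(α * s)) with hE
    have hEpos : 0 < E := Real.exp_pos _
    clear_value s E
    have hchain : ε * ((4*α^2*s - 4*α) * E) ≤ c * (ε * E) := by
      have h1 : ε * ((4*α^2*s - 4*α) * E) ≤ planarLaplacian v m := by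
        have := hsplit
        rw [hcm, hsc, hbar] at this
        linarith [h0, this.symm ▸ h0]
      have h2 : c * v m ≤ c * (ε * E) := by
        rw [hvm_eq, hWm]
        have hwle : W m - Real.exp (-(α * R^2)) ≤ E := by
          rw [hWm]; linarith
        nlinarith [mul_nonpos_of_nonneg_of_nonpos hc hneg.le,
          mul_nonneg (mul_nonneg hc hεpos.le) he2pos.le]
      linarith
    have hslb : R^2/4 < s := by
      rw [hs]
      calc R^2/4 = (R/2)*(R/2) := by ring
        _ < dist m p * dist m p := mul_self_lt_mul_self (by positivity) hinner
        _ = dist m p ^ 2 := by ring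
    have hαR2 : α * R^2 = 4 + (1+c)*R^2 := by
      rw [hα]; field_simp; ring
    -- contradiction : 4α²s − 4α > c
    have hαge : 4/R^2 ≤ α := by rw [hα]; linarith
    have hfinal : c < 4*α^2*s - 4*α := by
      have p1 : α^2*R^2 = 4*α + α*((1+c)*R^2) := by
        calc α^2*R^2 = α*(α*R^2) := by ring
          _ = α*(4+(1+c)*R^2) := by rw [hαR2]
          _ = 4*α + α*((1+c)*R^2) := by ring
      have p2 : (4/R^2)*((1+c)*R^2) ≤ α*((1+c)*R^2) :=
        mul_le_mul_of_nonneg_right hαge (by positivity)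
      have p3 : (4/R^2)*((1+c)*R^2) = 4*(1+c) := by
        field_simp
      have p4 : 4*α^2*(R^2/4) < 4*α^2*s :=
        mul_lt_mul_of_pos_left hslb (by positivity)
      have p5 : 4*α^2*(R^2/4) = α^2*R^2 := by ring
      linarith
    have hEc := mul_lt_mul_of_pos_right hfinal hEpos
    have hε' := mul_lt_mul_of_pos_left hEc hεpos
    linarith [hchain]
  -- final contradiction along the segment from q towards p
  have hqΩ : q ∈ Ω := hsub hqK.1
  have hvqmin : IsLocalMin v q := by
    have hev : ∀ᶠ z in 𝓝 q, 0 ≤ v z := by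
      filter_upwards [hΩ.mem_nhds hqΩ] with z hz using hv0 z hz
    filter_upwards [hev] with z hz
    rw [hvq]; exact hz
  -- the segment from q towards p
  have hRne : (R:ℝ) ≠ 0 := ne_of_gt hRpos
  have hRneC : (R:ℂ) ≠ 0 := Complex.ofReal_ne_zero.2 hRne
  have habsqp : ‖q - p‖ = R := by
    have := hqR
    rw [Complex.dist_eq] at this
    rw [← this, ← neg_sub p q, norm_neg]
  set γ : ℝ → ℂ := fun t => q + (t : ℂ) * ((p - q) / (R:ℂ)) with hγ
  have hγq : γ 0 = q := by simp only [hγ]; push_cast; ring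
  have hγsub : ∀ t : ℝ, γ t - p = (q - p) * ((((R - t) : ℝ) : ℂ) / (R:ℂ)) := by
    intro t
    simp only [hγ]
    push_cast
    field_simp
    ring
  have hγabs : ∀ t : ℝ, ‖γ t - p‖ = |R - t| := by
    intro t
    rw [hγsub t, norm_mul, norm_div, habsqp, Complex.norm_real, Complex.norm_real, Real.norm_eq_abs, Real.norm_eq_abs]
    rw [abs_of_pos hRpos]
    field_simp
  have hγdist : ∀ t : ℝ, (((γ t).re - p.re)^2 + ((γ t).im - p.im)^2) = (R - t)^2 := by
    intro t
    rw [dist_sq_re_im (γ t) p, Complex.dist_eq, hγabs t, _root_.sq_abs]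
  have hγA : ∀ t ∈ Set.Ioc (0:ℝ) (R/2), γ t ∈ A := by
    intro t ht
    have hd : dist (γ t) p = R - t := by
      rw [Complex.dist_eq, hγabs t, abs_of_pos (by linarith [ht.2, hRpos] : (0:ℝ) < R - t)]
    rw [hA]
    constructor
    · rw [mem_closedBall, hd]; linarith [ht.1]
    · rw [mem_ball, hd]; intro hcon; linarith [ht.2]
  have hγd : DifferentiableAt ℝ γ 0 := by
    rw [hγ]
    apply DifferentiableAt.const_add
    exact (Complex.ofRealCLM.differentiable.differentiableAt).mul_const _
  have hvγdiff : DifferentiableAt ℝ (fun t : ℝ => v (γ t)) 0 := by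
    have hvd : DifferentiableAt ℝ v (γ 0) := by
      rw [hγq]
      exact (hvC2 q hqΩ).differentiableAt (by norm_num)
    exact hvd.comp 0 hγd
  have hvγ0 : deriv (fun t : ℝ => v (γ t)) 0 = 0 := by
    apply IsLocalMin.deriv_eq_zero
    have htend : Filter.Tendsto γ (𝓝 0) (𝓝 q) := by
      have := hγd.continuousAt.tendsto
      rwa [hγq] at this
    have hev := htend.eventually hvqmin
    unfold IsLocalMin IsMinFilter
    simpa [hγq, hvq] using hev
  have hWseg : HasDerivAt (fun t : ℝ => Real.exp (-(α * (R - t)^2)) - Real.exp (-(α*R^2)))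
      (Real.exp (-(α * R^2)) * (2*α*R)) 0 := by
    have hbase : HasDerivAt (fun t : ℝ => R - t) (-1) 0 := by
      simpa using (hasDerivAt_id (0:ℝ)).const_sub R
    have hin : HasDerivAt (fun t : ℝ => -(α * (R - t)^2)) (2*α*R) 0 := by
      have := ((hbase.fun_pow 2).const_mul α).fun_neg
      norm_num at this
      exact this.congr_deriv (by ring)
    have hexp := hin.exp
    norm_num at hexp
    exact hexp.sub_const _
  set g : ℝ → ℝ := fun t : ℝ =>
    v (γ t) - ε * (Real.exp (-(α * (R - t)^2)) - Real.exp (-(α*R^2))) with hg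
  have hg0 : g 0 = 0 := by
    simp only [hg, hγq, hvq]
    norm_num
  have hgt : ∀ t ∈ Set.Ioc (0:ℝ) (R/2), g 0 ≤ g t := by
    intro t ht
    rw [hg0]
    have hWγ : W (γ t) = Real.exp (-(α * (R - t)^2)) := by
      simp only [hW]
      rw [hγdist t]
    have hγinA := hγA t ht
    have hhγ : h m ≤ h (γ t) := hmmin hγinA
    have hhval : h (γ t) = g t := by
      simp only [hh, hg, hWγ]
    rw [← hhval]
    linarith [hmnonneg, hhγ]
  have hgderiv : HasDerivAt g (0 - ε * (Real.exp (-(α * R^2)) * (2*α*R))) 0 := by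
    rw [hg]
    have h1 : HasDerivAt (fun t : ℝ => v (γ t)) 0 0 := by
      have := hvγdiff.hasDerivAt
      rwa [hvγ0] at this
    exact h1.sub (hWseg.const_mul ε)
  have hL := right_deriv_nonneg (by positivity : (0:ℝ) < R/2) hgt hgderiv
  nlinarith [mul_pos (mul_pos he2pos (by positivity : (0:ℝ) < 2*α*R)) hεpos]
end part7

lemma planarLaplacian_const (k : ℝ) (z : ℂ) : planarLaplacian (fun _ => k) z = 0 := by
  unfold planarLaplacian
  simp

theorem heins_rigidity (ρ : ℂ → ℝ)
    (hnonneg : ∀ z ∈ ball (0 : ℂ) 1, 0 ≤ ρ z)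
    (hcont : ContinuousOn ρ (ball (0 : ℂ) 1))
    (hdiscrete : ∀ z ∈ ball (0 : ℂ) 1, ρ z = 0 →
      ∃ U ∈ nhds z, ∀ w ∈ U, w ≠ z → ρ w ≠ 0)
    (hC2 : ∀ z ∈ ball (0 : ℂ) 1, 0 < ρ z → ContDiffAt ℝ 2 ρ z)
    (hcurv : ∀ z ∈ ball (0 : ℂ) 1, 0 < ρ z →
      -planarLaplacian (fun w => Real.log (ρ w)) z / ρ z ^ 2 ≤ -1)
    (heq : ∃ z₀ ∈ ball (0 : ℂ) 1, ρ z₀ = 2 / (1 - ‖z₀‖ ^ 2)) :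
    ∀ z ∈ ball (0 : ℂ) 1, ρ z = 2 / (1 - ‖z‖ ^ 2) := by
  have hlam_pos : ∀ z ∈ ball (0:ℂ) 1, 0 < 1 - ‖z‖^2 := by
    intro z hz
    have h9 : ‖z‖ < 1 := mem_ball_zero_iff.1 hz
    nlinarith [norm_nonneg z]
  have hlampos : ∀ z ∈ ball (0:ℂ) 1, 0 < 2/(1 - ‖z‖^2) := by
    intro z hz
    have := hlam_pos z hz
    positivity
  have hcurv2 : ∀ z ∈ ball (0:ℂ) 1, 0 < ρ z →
      ρ z ^2 ≤ planarLaplacian (fun w => Real.log (ρ w)) z := by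
    intro z hz hρ
    have h1 := hcurv z hz hρ
    have h2 : (0:ℝ) < ρ z^2 := by positivity
    rw [div_le_iff₀ h2] at h1
    linarith
  have hAS := ahlfors_schwarz ρ hnonneg hcont hC2 hcurv2
  have hρle : ∀ z ∈ ball (0:ℂ) 1, ρ z ≤ 2/(1 - ‖z‖^2) := by
    intro z hz
    rw [le_div_iff₀ (hlam_pos z hz)]
    exact hAS z hz
  set Ω : Set ℂ := ball (0:ℂ) 1 ∩ ρ ⁻¹' (Set.Ioi 0) with hΩdef
  have hΩopen : IsOpen Ω := hcont.isOpen_inter_preimage isOpen_ball isOpen_Ioi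
  have hΩball : Ω ⊆ ball (0:ℂ) 1 := Set.inter_subset_left
  have hΩmem : ∀ z, z ∈ Ω ↔ z ∈ ball (0:ℂ) 1 ∧ 0 < ρ z := by
    intro z
    rw [hΩdef]
    simp [Set.mem_preimage]
  set v : ℂ → ℝ := fun z => Real.log (2/(1 - ‖z‖^2)) - Real.log (ρ z) with hv
  have hv0 : ∀ z ∈ Ω, 0 ≤ v z := by
    intro z hz
    obtain ⟨hz1, hρz⟩ := (hΩmem z).1 hz
    have h1 := hρle z hz1
    simp only [hv, sub_nonneg]
    exact Real.log_le_log hρz h1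
  have hloglam_ev : ∀ z ∈ ball (0:ℂ) 1,
      (fun w => Real.log (2/(1 - ‖w‖^2)))
        =ᶠ[𝓝 z] (fun w => Real.log 2 - Real.log (1^2 - ‖w‖^2)) := by
    intro z hz
    filter_upwards [isOpen_ball.mem_nhds hz] with w hw
    have hw1 := hlam_pos w hw
    rw [Real.log_div two_ne_zero (ne_of_gt hw1)]
    norm_num
  have hloglamC2 : ∀ z ∈ ball (0:ℂ) 1,
      ContDiffAt ℝ 2 (fun w => Real.log (2/(1 - ‖w‖^2))) z := by
    intro z hz
    have hz1 : ‖z‖ < 1 := mem_ball_zero_iff.1 hz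
    have h2 := (contDiffAt_const (c := Real.log 2)).sub (contDiffAt_log_quad (r := 1) (z := z) hz1)
    exact h2.congr_of_eventuallyEq (hloglam_ev z hz)
  have hloglam_lap : ∀ z ∈ ball (0:ℂ) 1,
      planarLaplacian (fun w => Real.log (2/(1 - ‖w‖^2))) z
        = (2/(1 - ‖z‖^2))^2 := by
    intro z hz
    have hz1 : ‖z‖ < 1 := mem_ball_zero_iff.1 hz
    rw [planarLaplacian_congr (hloglam_ev z hz),
      planarLaplacian_sub (contDiffAt_const (c := Real.log 2)) (contDiffAt_log_quad (r := 1) hz1),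
      planarLaplacian_const, laplacian_log_quad hz1 one_pos]
    have hq := hlam_pos z hz
    rw [div_pow]
    field_simp
    ring
  have hvC2 : ∀ z ∈ Ω, ContDiffAt ℝ 2 v z := by
    intro z hz
    obtain ⟨hz1, hρz⟩ := (hΩmem z).1 hz
    rw [hv]
    exact (hloglamC2 z hz1).sub ((hC2 z hz1 hρz).log (ne_of_gt hρz))
  have hΔv : ∀ z ∈ Ω, planarLaplacian v z ≤ 2*(2/(1 - ‖z‖^2))^2 * v z := by
    intro z hz
    obtain ⟨hz1, hρz⟩ := (hΩmem z).1 hz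
    have hLpos := hlampos z hz1
    have hsplit : planarLaplacian v z
        = planarLaplacian (fun w => Real.log (2/(1 - ‖w‖^2))) z
          - planarLaplacian (fun w => Real.log (ρ w)) z := by
      rw [hv]
      exact planarLaplacian_sub (hloglamC2 z hz1) ((hC2 z hz1 hρz).log (ne_of_gt hρz))
    have hρlap := hcurv2 z hz1 hρz
    have h1 : planarLaplacian v z ≤ (2/(1 - ‖z‖^2))^2 - ρ z^2 := by
      rw [hsplit, hloglam_lap z hz1]
      linarith
    have hexp : Real.exp (-(v z)) = ρ z / (2/(1 - ‖z‖^2)) := by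
      simp only [hv]
      rw [neg_sub, Real.exp_sub, Real.exp_log hρz, Real.exp_log hLpos]
    have hρsq : ρ z^2 = (2/(1 - ‖z‖^2))^2 * Real.exp (-(2*v z)) := by
      have h2 : Real.exp (-(2*v z)) = (ρ z / (2/(1 - ‖z‖^2)))^2 := by
        rw [show -(2*v z) = (-(v z)) + (-(v z)) by ring, Real.exp_add, hexp]
        ring
      rw [h2]
      have hgen : ∀ a b : ℝ, b ≠ 0 → b^2 * (a/b)^2 = a^2 := by
        intro a b hb; field_simp
      rw [hgen (ρ z) _ (ne_of_gt hLpos)]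
    have h1mexp : 1 - Real.exp (-(2 * v z)) ≤ 2 * v z := by
      have := Real.add_one_le_exp (-(2*v z))
      linarith
    have h3 : (2/(1 - ‖z‖^2))^2 - ρ z^2
        = (2/(1 - ‖z‖^2))^2 * (1 - Real.exp (-(2*v z))) := by
      rw [hρsq]; ring
    have h4 : (2/(1 - ‖z‖^2))^2 * (1 - Real.exp (-(2*v z)))
        ≤ (2/(1 - ‖z‖^2))^2 * (2 * v z) :=
      mul_le_mul_of_nonneg_left h1mexp (by positivity)
    linarith [h1, h3 ▸ h1, h4]
  -- the clopen argument
  obtain ⟨z₀, hz₀b, hz₀eq⟩ := heq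
  set U : Set ℂ := {z | z ∈ ball (0:ℂ) 1 ∧ ρ z = 2/(1 - ‖z‖^2)} with hU
  set V : Set ℂ := ball (0:ℂ) 1 ∩ (fun z => ρ z - 2/(1 - ‖z‖^2)) ⁻¹' {(0:ℝ)}ᶜ
    with hV
  have hVopen : IsOpen V := by
    apply ContinuousOn.isOpen_inter_preimage _ isOpen_ball isOpen_compl_singleton
    apply hcont.sub
    apply ContinuousOn.div continuousOn_const
    · exact (continuous_const.sub (continuous_norm.pow 2)).continuousOn
    · intro z hz
      exact ne_of_gt (hlam_pos z hz)
  have hUopen : IsOpen U := by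
    rw [Metric.isOpen_iff]
    intro z₁ hz₁U
    obtain ⟨hz₁b, hz₁eq⟩ := hz₁U
    have hρz₁ : 0 < ρ z₁ := by rw [hz₁eq]; exact hlampos z₁ hz₁b
    have hz₁Ω : z₁ ∈ Ω := (hΩmem z₁).2 ⟨hz₁b, hρz₁⟩
    obtain ⟨δ, hδpos, hδsub⟩ := Metric.isOpen_iff.1 hΩopen z₁ hz₁Ω
    have hrpos : 0 < δ/5 := by linarith
    have hcb : closedBall z₁ (2*(δ/5)) ⊆ Ω := by
      intro x hx
      apply hδsub
      rw [mem_ball]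
      have := mem_closedBall.1 hx
      linarith
    -- bound the coefficient on the closed ball
    have hcont2 : ContinuousOn (fun z => 2*(2/(1 - ‖z‖^2))^2)
        (closedBall z₁ (2*(δ/5))) := by
      apply ContinuousOn.mul continuousOn_const
      apply ContinuousOn.pow
      apply ContinuousOn.div continuousOn_const
      · exact (continuous_const.sub (continuous_norm.pow 2)).continuousOn
      · intro x hx
        exact ne_of_gt (hlam_pos x (hΩball (hcb hx)))
    obtain ⟨zc, hzc, hzcmax⟩ := (isCompact_closedBall z₁ (2*(δ/5))).exists_isMaxOn
      ⟨z₁, mem_closedBall_self (by linarith)⟩ hcont2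
    set c : ℝ := 2*(2/(1 - ‖zc‖^2))^2 with hc
    have hcnn : 0 ≤ c := by
      have h1 : 2*(2/(1 - ‖z₁‖^2))^2 ≤ c :=
        hzcmax (mem_closedBall_self (by linarith))
      have h2 := hlampos z₁ hz₁b
      nlinarith
    have hΔc : ∀ z ∈ closedBall z₁ (2*(δ/5)), planarLaplacian v z ≤ c * v z := by
      intro z hz
      have hzΩ : z ∈ Ω := hcb hz
      have h1 := hΔv z hzΩ
      have h2 : 2*(2/(1 - ‖z‖^2))^2 ≤ c := hzcmax hz
      have h3 := hv0 z hzΩ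
      calc planarLaplacian v z ≤ 2*(2/(1 - ‖z‖^2))^2 * v z := h1
        _ ≤ c * v z := mul_le_mul_of_nonneg_right h2 h3
    have hvz₁ : v z₁ = 0 := by
      simp only [hv]
      rw [hz₁eq]
      ring
    have hzero := hopf_core v Ω hΩopen hvC2 hv0 c hcnn z₁ (δ/5) hrpos hcb hΔc hvz₁
    refine ⟨δ/5, hrpos, ?_⟩
    intro w hw
    have hwΩ : w ∈ Ω := hcb (ball_subset_closedBall.trans
      (closedBall_subset_closedBall (by linarith)) hw)
    obtain ⟨hwb, hρw⟩ := (hΩmem w).1 hwΩ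
    have hvw : v w = 0 := hzero w hw
    have hlogs : Real.log (ρ w) = Real.log (2/(1 - ‖w‖^2)) := by
      simp only [hv] at hvw
      linarith
    have : ρ w = 2/(1 - ‖w‖^2) := by
      have h1 : Real.exp (Real.log (ρ w)) = Real.exp (Real.log (2/(1 - ‖w‖^2))) := by
        rw [hlogs]
      rwa [Real.exp_log hρw, Real.exp_log (hlampos w hwb)] at h1
    exact ⟨hwb, this⟩
  -- preconnectedness
  have hdisj : Disjoint U V := by
    rw [Set.disjoint_left]
    intro z hzU hzV
    have h1 := hzU.2
    have h2 : ρ z - 2/(1 - ‖z‖^2) ≠ 0 := hzV.2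
    apply h2
    rw [h1]; ring
  have hcover : ball (0:ℂ) 1 ⊆ U ∪ V := by
    intro z hz
    by_cases hcase : ρ z = 2/(1 - ‖z‖^2)
    · exact Or.inl ⟨hz, hcase⟩
    · refine Or.inr ⟨hz, ?_⟩
      simp only [Set.mem_preimage, Set.mem_compl_iff, Set.mem_singleton_iff]
      intro hcon
      apply hcase
      linarith [sub_eq_zero.1 hcon]
  have hne : (ball (0:ℂ) 1 ∩ U).Nonempty := ⟨z₀, hz₀b, ⟨hz₀b, hz₀eq⟩⟩
  have hfinal := (convex_ball (0:ℂ) 1).isPreconnected.subset_left_of_subset_union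
    hUopen hVopen hdisj hcover hne
  intro z hz
  exact (hfinal hz).2
end
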